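/- Under the bound m ≤ D_t ≤ M for all t, and for complex z with Re z ∈ (−δ, 1+δ) where δ = m/(M−m), the operator (1−z) D_s^{-1} + z D_t^{-1} is invertible and ‖((1−z)D_s^{-1} + z D_t^{-1})^{-1}‖ ≤ (M/2)·((M+m)/(M−m))·(δ + 1/2 − |Re z − 1/2|)^{-1}. -/

import Mathlib

open NormedSpace ComplexInnerProductSpace

private lemma quad_disc (a b c : ℝ) (hc : 0 < c)
    (h : ∀ t : ℝ, 0 ≤ a + 2 * b * t + c * t ^ 2) : b ^ 2 ≤ a * c := by
  have h2 := h (-b / c)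
  have e : a + 2 * b * (-b / c) + c * (-b / c) ^ 2 = a - b ^ 2 / c := by
    field_simp; ring
  rw [e, sub_nonneg] at h2
  exact (div_le_iff₀ hc).mp h2


private lemma real_coercive (m M ρ n qs qt : ℝ) (hm : 0 < m) (hmM : m < M) (hn : 0 ≤ n)
    (h1 : n ≤ M * qs) (h2 : m * qs ≤ n) (h3 : n ≤ M * qt) (h4 : m * qt ≤ n)
    (hρl : -(m / (M - m)) < ρ) (hρu : ρ < 1 + m / (M - m)) :
    2 * (M - m) * (m / (M - m) + 1 / 2 - |ρ - 1 / 2|) / (M * (M + m)) * n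
      ≤ (1 - ρ) * qs + ρ * qt := by
  have hMm : 0 < M - m := by linarith
  have hM : 0 < M := hm.trans hmM
  set δ := m / (M - m) with hδdef
  have hδ : (M - m) * δ = m := by rw [hδdef]; field_simp
  have hδn : (M - m) * δ * n = m * n := by linear_combination n * hδ
  rw [div_mul_eq_mul_div, div_le_iff₀ (by positivity)]
  rcases le_total ρ 0 with hρ0 | hρ0
  · rw [abs_of_nonpos (by linarith)]
    have hg1 : 0 ≤ (1 - ρ) * (M * qs - n) := mul_nonneg (by linarith) (by linarith)
    have hg2 : 0 ≤ ρ * (m * qt - n) := by nlinarith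
    have hh : 0 ≤ m + (M - m) * ρ := by nlinarith [mul_lt_mul_of_pos_left hρl hMm]
    have key : n * (m + (M - m) * ρ) ≤ m * M * ((1 - ρ) * qs + ρ * qt) := by
      nlinarith [mul_nonneg hm.le hg1, mul_nonneg hM.le hg2]
    have hX0 : 0 ≤ (1 - ρ) * qs + ρ * qt := by
      nlinarith [key, mul_nonneg hn hh, mul_pos hm hM]
    linarith [key, hδn, mul_nonneg (mul_nonneg hMm.le hM.le) hX0]
  · rcases le_total ρ 1 with hρ1 | hρ1
    · have hg1 : 0 ≤ (1 - ρ) * (M * qs - n) := mul_nonneg (by linarith) (by linarith)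
      have hg2 : 0 ≤ ρ * (M * qt - n) := mul_nonneg (by linarith) (by linarith)
      have key : n ≤ M * ((1 - ρ) * qs + ρ * qt) := by nlinarith [hg1, hg2]
      have hRn : 0 ≤ |ρ - 1 / 2| := abs_nonneg _
      linarith [key, hδn, mul_nonneg (mul_nonneg hMm.le hn) hRn,
        mul_nonneg (by positivity : (0:ℝ) ≤ M + m)
          (by linarith [key] : (0:ℝ) ≤ M * ((1 - ρ) * qs + ρ * qt) - n)]
    · rw [abs_of_nonneg (by linarith)]
      have hg1 : 0 ≤ (1 - ρ) * (m * qs - n) := by nlinarith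
      have hg2 : 0 ≤ ρ * (M * qt - n) := mul_nonneg (by linarith) (by linarith)
      have hh : 0 ≤ m + (M - m) * (1 - ρ) := by nlinarith [mul_lt_mul_of_pos_left hρu hMm]
      have key : n * (m + (M - m) * (1 - ρ)) ≤ m * M * ((1 - ρ) * qs + ρ * qt) := by
        nlinarith [mul_nonneg hM.le hg1, mul_nonneg hm.le hg2]
      have hX0 : 0 ≤ (1 - ρ) * qs + ρ * qt := by
        nlinarith [key, mul_nonneg hn hh, mul_pos hm hM]
      linarith [key, hδn, mul_nonneg (mul_nonneg hMm.le hM.le) hX0]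

section aux
variable {H : Type*} [NormedAddCommGroup H] [InnerProductSpace ℂ H] [CompleteSpace H]

variable {H : Type*} [NormedAddCommGroup H] [InnerProductSpace ℂ H] [CompleteSpace H]

private lemma cs_re (P : H →L[ℂ] H) (hP : IsSelfAdjoint P)
    (hpos : ∀ u : H, 0 ≤ (⟪u, P u⟫).re) (y v : H) (hv : 0 < (⟪v, P v⟫).re) :
    (⟪y, P v⟫).re ^ 2 ≤ (⟪y, P y⟫).re * (⟪v, P v⟫).re := by
  apply quad_disc _ _ _ hv
  intro t
  have h := hpos (y + (t : ℂ) • v)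
  have hsym : ⟪v, P y⟫ = (starRingEnd ℂ) ⟪y, P v⟫ := by
    rw [← hP.adjoint_eq, ContinuousLinearMap.adjoint_inner_right, inner_conj_symm,
      hP.adjoint_eq]
  have hexp : ⟪y + (t : ℂ) • v, P (y + (t : ℂ) • v)⟫
      = ⟪y, P y⟫ + (t : ℂ) * ⟪y, P v⟫ + (t : ℂ) * ⟪v, P y⟫ + (t : ℂ) * (t : ℂ) * ⟪v, P v⟫ := by
    rw [map_add, map_smul, inner_add_left, inner_add_right, inner_add_right,
      inner_smul_left, inner_smul_right, inner_smul_left, inner_smul_right, Complex.conj_ofReal]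
    ring
  rw [hexp, hsym] at h
  simp only [Complex.add_re, Complex.mul_re, Complex.mul_im, Complex.ofReal_re,
    Complex.ofReal_im, Complex.conj_re, Complex.conj_im] at h
  nlinarith [h]

private lemma inv_bounds (P Q : H →L[ℂ] H) (hP : IsSelfAdjoint P) (m M : ℝ)
    (hm : 0 < m) (hM : 0 < M)
    (hb : ∀ x : H, m * ‖x‖ ^ 2 ≤ (⟪x, P x⟫).re ∧ (⟪x, P x⟫).re ≤ M * ‖x‖ ^ 2)
    (h1 : P * Q = 1) (h2 : Q * P = 1) (x : H) :
    (⟪x, Q x⟫).im = 0 ∧ ‖x‖ ^ 2 / M ≤ (⟪x, Q x⟫).re ∧ (⟪x, Q x⟫).re ≤ ‖x‖ ^ 2 / m := by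
  have hQ : IsSelfAdjoint Q := by
    have e1 : star Q * P = 1 := by
      have := congrArg star h1
      rwa [star_mul, star_one, hP.star_eq] at this
    have : star Q = star Q * (P * Q) := by rw [h1, mul_one]
    rw [← mul_assoc, e1, one_mul] at this
    exact this
  have him : (⟪x, Q x⟫).im = 0 := by
    have e : (starRingEnd ℂ) ⟪x, Q x⟫ = ⟪x, Q x⟫ := by
      rw [inner_conj_symm]
      conv_lhs => rw [← hQ.adjoint_eq]
      exact ContinuousLinearMap.adjoint_inner_left Q x x
    exact Complex.conj_eq_iff_im.mp e
  set y := Q x with hy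
  have hxy : P y = x := by
    have := congrArg (fun f : H →L[ℂ] H => f x) h1
    simpa [ContinuousLinearMap.mul_apply] using this
  have hre : (⟪x, Q x⟫).re = (⟪y, P y⟫).re := by
    have e : ⟪x, Q x⟫ = (starRingEnd ℂ) ⟪y, P y⟫ := by
      rw [inner_conj_symm, hxy]
    rw [e, Complex.conj_re]
  have hpos : ∀ u : H, 0 ≤ (⟪u, P u⟫).re := fun u => le_trans (by positivity) (hb u).1
  refine ⟨him, ?_, ?_⟩
  · rcases eq_or_ne x 0 with hx0 | hx0
    · rw [hx0]; simp
    · have hnx : 0 < ‖x‖ := norm_pos_iff.mpr hx0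
      have hvx : 0 < (⟪x, P x⟫).re := lt_of_lt_of_le (by positivity) (hb x).1
      have hcs := cs_re P hP hpos y x hvx
      have hyx : (⟪y, P x⟫).re = ‖x‖ ^ 2 := by
        have e : ⟪y, P x⟫ = ⟪P y, x⟫ := by
          rw [← hP.adjoint_eq, ContinuousLinearMap.adjoint_inner_right, hP.adjoint_eq]
        rw [e, hxy, inner_self_eq_norm_sq_to_K]; norm_cast
      rw [hyx] at hcs
      have hub := (hb x).2
      have ha : 0 ≤ (⟪y, P y⟫).re := hpos y
      have key : ‖x‖ ^ 2 ≤ M * (⟪y, P y⟫).re := by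
        nlinarith [hcs, mul_le_mul_of_nonneg_left hub ha, mul_pos hnx hnx, sq_nonneg ‖x‖]
      rw [hre, div_le_iff₀ hM]
      linarith [key]
  · have hly := (hb y).1
    have hub2 : (⟪y, P y⟫).re ≤ ‖y‖ * ‖x‖ := by
      calc (⟪y, P y⟫).re ≤ ‖⟪y, P y⟫‖ := Complex.re_le_norm _
        _ ≤ ‖y‖ * ‖P y‖ := norm_inner_le_norm _ _
        _ = ‖y‖ * ‖x‖ := by rw [hxy]
    rw [hre, le_div_iff₀ hm]
    nlinarith [hly, hub2, sq_nonneg (‖x‖ - m * ‖y‖),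
      mul_le_mul_of_nonneg_left hub2 hm.le, mul_le_mul_of_nonneg_left hly hm.le]
end aux

/-- `D_t = e^{tL} D e^{tL*}` on the complexified Hilbert space. -/
noncomputable def DtC {H : Type*} [NormedAddCommGroup H] [InnerProductSpace ℂ H]
    [CompleteSpace H] (L D : H →L[ℂ] H) (t : ℝ) : H →L[ℂ] H :=
  exp ((t : ℂ) • L) * D * ContinuousLinearMap.adjoint (exp ((t : ℂ) • L))

/-- Under the uniform bounds `m ≤ D_t ≤ M` for all `t` (where
`0 < m < M`, `δ = m/(M−m)`), for any complex `z` with `Re z ∈ (−δ, 1+δ)` the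
operator `(1−z) D_s⁻¹ + z D_t⁻¹` is invertible on the complexified Hilbert space
with `‖((1−z)D_s⁻¹ + z D_t⁻¹)⁻¹‖ ≤ (M/2)·((M+m)/(M−m))·(δ + 1/2 − |Re z − 1/2|)⁻¹`.
`Dinv t` denotes the two-sided bounded inverse of `D_t`. -/
theorem stmt8 {H : Type*} [NormedAddCommGroup H] [InnerProductSpace ℂ H] [CompleteSpace H]
    (L D : H →L[ℂ] H) (hD : IsSelfAdjoint D) (m M : ℝ) (hm : 0 < m) (hmM : m < M)
    (hbound : ∀ (t : ℝ) (x : H),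
      m * ‖x‖ ^ 2 ≤ (⟪x, DtC L D t x⟫).re ∧ (⟪x, DtC L D t x⟫).re ≤ M * ‖x‖ ^ 2)
    (Dinv : ℝ → H →L[ℂ] H)
    (hDinv : ∀ t, DtC L D t * Dinv t = 1 ∧ Dinv t * DtC L D t = 1)
    (s t : ℝ) (z : ℂ) (hz : z.re ∈ Set.Ioo (-(m / (M - m))) (1 + m / (M - m))) :
    ∃ B : H →L[ℂ] H,
      ((1 - z) • Dinv s + z • Dinv t) * B = 1 ∧
      B * ((1 - z) • Dinv s + z • Dinv t) = 1 ∧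
      ‖B‖ ≤ M / 2 * ((M + m) / (M - m)) * (m / (M - m) + 1 / 2 - |z.re - 1 / 2|)⁻¹ := by
  obtain ⟨hzl, hzu⟩ := hz
  have hM : 0 < M := hm.trans hmM
  have hMm : 0 < M - m := by linarith
  set r : ℝ := m / (M - m) + 1 / 2 - |z.re - 1 / 2| with hrdef
  have hr : 0 < r := by
    rw [hrdef]
    have habs : |z.re - 1 / 2| < m / (M - m) + 1 / 2 := by
      rw [abs_lt]; constructor <;> linarith
    linarith
  set c₀ : ℝ := 2 * (M - m) * r / (M * (M + m)) with hc₀def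
  have hc₀ : 0 < c₀ := by rw [hc₀def]; positivity
  -- selfadjointness of DtC
  have hDsa : ∀ u : ℝ, IsSelfAdjoint (DtC L D u) := by
    intro u
    unfold DtC
    show star _ = _
    simp [star_mul, mul_assoc, ContinuousLinearMap.star_eq_adjoint,
      ContinuousLinearMap.adjoint_adjoint, hD.adjoint_eq]
  have hQ : ∀ (u : ℝ) (x : H), (⟪x, Dinv u x⟫).im = 0 ∧
      ‖x‖ ^ 2 / M ≤ (⟪x, Dinv u x⟫).re ∧ (⟪x, Dinv u x⟫).re ≤ ‖x‖ ^ 2 / m :=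
    fun u => inv_bounds (DtC L D u) (Dinv u) (hDsa u) m M hm hM (hbound u)
      (hDinv u).1 (hDinv u).2
  set Top : H →L[ℂ] H := (1 - z) • Dinv s + z • Dinv t with hTop
  -- coercivity
  have hcoer : ∀ x : H, c₀ * ‖x‖ ^ 2 ≤ (⟪x, Top x⟫).re := by
    intro x
    obtain ⟨hims, hls, hus⟩ := hQ s x
    obtain ⟨himt, hlt, hut⟩ := hQ t x
    have hT : ⟪x, Top x⟫ = (1 - z) * ⟪x, Dinv s x⟫ + z * ⟪x, Dinv t x⟫ := by
      rw [hTop]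
      simp [inner_add_right, inner_smul_right, ContinuousLinearMap.add_apply,
        ContinuousLinearMap.smul_apply]
    have hre : (⟪x, Top x⟫).re
        = (1 - z.re) * (⟪x, Dinv s x⟫).re + z.re * (⟪x, Dinv t x⟫).re := by
      rw [hT]
      simp [Complex.add_re, Complex.mul_re, hims, himt, Complex.sub_re, Complex.one_re]
    rw [hre, hc₀def, hrdef]
    exact real_coercive m M z.re (‖x‖ ^ 2) _ _ hm hmM (by positivity)
      ((div_le_iff₀' hM).mp hls) ((le_div_iff₀' hm).mp hus)
      ((div_le_iff₀' hM).mp hlt) ((le_div_iff₀' hm).mp hut) hzl hzu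
  -- lower norm bound
  have hlow : ∀ x : H, c₀ * ‖x‖ ≤ ‖Top x‖ := by
    intro x
    rcases eq_or_ne x 0 with hx0 | hx0
    · simp [hx0]
    · have hnx : 0 < ‖x‖ := norm_pos_iff.mpr hx0
      have h2 : (⟪x, Top x⟫).re ≤ ‖x‖ * ‖Top x‖ := by
        calc (⟪x, Top x⟫).re ≤ ‖⟪x, Top x⟫‖ := Complex.re_le_norm _
          _ ≤ ‖x‖ * ‖Top x‖ := norm_inner_le_norm _ _
      nlinarith [hcoer x, h2, hnx]
  -- kernel trivial
  have hinj : Function.Injective Top := by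
    intro a b hab
    have h0 : Top (a - b) = 0 := by rw [map_sub, hab, sub_self]
    have hl := hlow (a - b)
    rw [h0, norm_zero] at hl
    have hab0 : ‖a - b‖ ≤ 0 := by nlinarith [norm_nonneg (a - b)]
    have : a - b = 0 := norm_eq_zero.mp (le_antisymm hab0 (norm_nonneg _))
    exact sub_eq_zero.mp this
  have hker : Top.ker = ⊥ := LinearMap.ker_eq_bot.mpr hinj
  -- closed range
  have hanti : AntilipschitzWith (Real.toNNReal c₀⁻¹) Top := by
    apply Top.antilipschitz_of_bound
    intro x
    rw [Real.coe_toNNReal _ (by positivity), inv_mul_eq_div, le_div_iff₀ hc₀]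
    linarith [hlow x]
  have hclosed : IsClosed (Set.range Top) := hanti.isClosed_range Top.uniformContinuous
  -- surjectivity
  have hsurj : Top.range = ⊤ := by
    have hRc : IsClosed ((Top.range : Submodule ℂ H) : Set H) := by
      rw [LinearMap.coe_range]; exact hclosed
    haveI : CompleteSpace (Top.range : Submodule ℂ H) := hRc.completeSpace_coe
    rw [← Submodule.orthogonal_eq_bot_iff, Submodule.eq_bot_iff]
    intro x hx
    have h0 : ⟪Top x, x⟫ = 0 :=
      (Submodule.mem_orthogonal _ _).mp hx (Top x) (LinearMap.mem_range_self _ x)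
    have hre0 : (⟪x, Top x⟫).re = 0 := by
      have e : ⟪x, Top x⟫ = (starRingEnd ℂ) ⟪Top x, x⟫ := (inner_conj_symm _ _).symm
      rw [e, h0, map_zero, Complex.zero_re]
    have := hcoer x
    rw [hre0] at this
    have hsq : ‖x‖ ^ 2 ≤ 0 := by nlinarith [hc₀]
    have hx0 : ‖x‖ ≤ 0 := by nlinarith [hsq, norm_nonneg x]
    exact norm_eq_zero.mp (le_antisymm hx0 (norm_nonneg x))
  set e := ContinuousLinearEquiv.ofBijective Top hker hsurj with he
  refine ⟨(e.symm : H →L[ℂ] H), ?_, ?_, ?_⟩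
  · ext y
    simp only [ContinuousLinearMap.mul_apply, ContinuousLinearMap.one_apply,
      ContinuousLinearEquiv.coe_coe, he]
    exact ContinuousLinearEquiv.ofBijective_apply_symm_apply Top hker hsurj y
  · ext y
    simp only [ContinuousLinearMap.mul_apply, ContinuousLinearMap.one_apply,
      ContinuousLinearEquiv.coe_coe, he]
    exact ContinuousLinearEquiv.ofBijective_symm_apply_apply Top hker hsurj y
  · have hCeq : M / 2 * ((M + m) / (M - m)) * r⁻¹ = c₀⁻¹ := by
      rw [hc₀def]
      field_simp
    rw [show M / 2 * ((M + m) / (M - m)) * (m / (M - m) + 1 / 2 - |z.re - 1 / 2|)⁻¹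
        = c₀⁻¹ from hCeq]
    apply ContinuousLinearMap.opNorm_le_bound _ (by positivity)
    intro y
    have h1 := hlow ((e.symm : H →L[ℂ] H) y)
    have h2 : Top ((e.symm : H →L[ℂ] H) y) = y := by
      simp only [ContinuousLinearEquiv.coe_coe, he]
      exact ContinuousLinearEquiv.ofBijective_apply_symm_apply Top hker hsurj y
    rw [h2] at h1
    rw [inv_mul_eq_div, le_div_iff₀ hc₀]
    linarith
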